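/- The normalizing constant of the bivariate exponential conditionals density satisfies κ(θ) = θ e^{−1/θ} / ∫_{1/θ}^∞ w^{−1} e^{−w} dw for θ > 0; equivalently ∫₀^∞∫₀^∞ exp{−x₁−x₂−θx₁x₂} dx₁dx₂ = e^{1/θ} ∫_{1/θ}^∞ w^{−1}e^{−w} dw / θ. -/
import Mathlib


open Real

open MeasureTheory Set in
private lemma aux_inner (θ x₂ : ℝ) (hθ : 0 < θ) (hx₂ : 0 < x₂) :
    (∫ x₁ in Set.Ioi (0:ℝ), Real.exp (-x₁ - x₂ - θ * x₁ * x₂))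
      = Real.exp (-x₂) * (1 + θ * x₂)⁻¹ := by
  have hb : 0 < 1 + θ * x₂ := by positivity
  have h1 : ∀ x₁ : ℝ, Real.exp (-x₁ - x₂ - θ * x₁ * x₂)
      = Real.exp (-x₂) * Real.exp (-((1 + θ * x₂) * x₁)) := by
    intro x₁
    rw [← Real.exp_add]
    ring_nf
  calc (∫ x₁ in Set.Ioi (0:ℝ), Real.exp (-x₁ - x₂ - θ * x₁ * x₂))
      = ∫ x₁ in Set.Ioi (0:ℝ), Real.exp (-x₂) * Real.exp (-((1 + θ * x₂) * x₁)) := by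
        simp_rw [h1]
    _ = Real.exp (-x₂) * ∫ x₁ in Set.Ioi (0:ℝ), Real.exp (-((1 + θ * x₂) * x₁)) := by
        rw [integral_const_mul]
    _ = Real.exp (-x₂) * (1 + θ * x₂)⁻¹ := by
        have := integral_comp_mul_left_Ioi (fun x => Real.exp (-x)) 0 hb
        simp only [mul_zero, smul_eq_mul, integral_exp_neg_Ioi_zero, mul_one] at this
        rw [this]

open MeasureTheory Set in
private lemma aux_shift (c : ℝ) :
    (∫ x in Set.Ioi (0:ℝ), (x + c)⁻¹ * Real.exp (-(x + c)))
      = ∫ w in Set.Ioi c, w⁻¹ * Real.exp (-w) := by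
  have h := (measurePreserving_add_right (volume : Measure ℝ) c).setIntegral_preimage_emb
    (measurableEmbedding_addRight c) (fun w => w⁻¹ * Real.exp (-w)) (Set.Ioi c)
  simpa using h

open MeasureTheory Set in
private lemma aux_integrable (c : ℝ) (hc : 0 < c) :
    IntegrableOn (fun w => w⁻¹ * Real.exp (-w)) (Set.Ioi c) := by
  have hexp : IntegrableOn (fun x : ℝ => Real.exp (-x)) (Set.Ioi c) := by
    simpa using exp_neg_integrableOn_Ioi c one_pos
  apply Integrable.mono' (hexp.const_mul c⁻¹)
  · apply Measurable.aestronglyMeasurable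
    exact (measurable_inv.mul (by fun_prop))
  · filter_upwards [ae_restrict_mem measurableSet_Ioi] with w hw
    have hw' : (0:ℝ) < w := lt_trans hc hw
    have h1 : w⁻¹ ≤ c⁻¹ := by
      exact inv_anti₀ hc (le_of_lt hw)
    rw [norm_mul, Real.norm_eq_abs, Real.norm_eq_abs,
      abs_of_pos (inv_pos.mpr hw'), abs_of_pos (Real.exp_pos _)]
    exact mul_le_mul_of_nonneg_right h1 (Real.exp_pos _).le

open MeasureTheory Set in
private lemma aux_pos (c : ℝ) (hc : 0 < c) :
    0 < ∫ w in Set.Ioi c, w⁻¹ * Real.exp (-w) := by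
  rw [setIntegral_pos_iff_support_of_nonneg_ae]
  · have hsub : Set.Ioi c ⊆ Function.support fun w => w⁻¹ * Real.exp (-w) := by
      intro w hw
      have hw' : (0:ℝ) < w := lt_trans hc hw
      simp only [Function.mem_support]
      positivity
    have : (Function.support fun w => w⁻¹ * Real.exp (-w)) ∩ Set.Ioi c = Set.Ioi c :=
      Set.inter_eq_right.mpr hsub
    rw [this, Real.volume_Ioi]
    exact ENNReal.zero_lt_top
  · filter_upwards [ae_restrict_mem measurableSet_Ioi] with w hw
    have hw' : (0:ℝ) < w := lt_trans hc hw
    positivity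
  · exact aux_integrable c hc

/-- The normalizing constant of the bivariate exponential conditionals density satisfies
`κ(θ) = θ e^{-1/θ} / ∫_{1/θ}^∞ w⁻¹ e^{-w} dw` for `θ > 0`; equivalently,
`∫₀^∞ ∫₀^∞ exp{-x₁ - x₂ - θ x₁ x₂} dx₁ dx₂ = e^{1/θ} (∫_{1/θ}^∞ w⁻¹ e^{-w} dw) / θ`. -/
theorem exponential_conditionals_normalizing_constant (θ : ℝ) (hθ : 0 < θ) :
    (∫ x₂ in Set.Ioi (0:ℝ), ∫ x₁ in Set.Ioi (0:ℝ), Real.exp (-x₁ - x₂ - θ * x₁ * x₂))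
        = Real.exp (1/θ) * (∫ w in Set.Ioi (1/θ), w⁻¹ * Real.exp (-w)) / θ ∧
      ∀ κ : ℝ,
        κ * (∫ x₂ in Set.Ioi (0:ℝ), ∫ x₁ in Set.Ioi (0:ℝ),
              Real.exp (-x₁ - x₂ - θ * x₁ * x₂)) = 1 →
        κ = θ * Real.exp (-(1/θ)) / ∫ w in Set.Ioi (1/θ), w⁻¹ * Real.exp (-w) := by
  have hc : 0 < 1/θ := by positivity
  have key : (∫ x₂ in Set.Ioi (0:ℝ), ∫ x₁ in Set.Ioi (0:ℝ), Real.exp (-x₁ - x₂ - θ * x₁ * x₂))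
      = Real.exp (1/θ) * (∫ w in Set.Ioi (1/θ), w⁻¹ * Real.exp (-w)) / θ := by
    have step1 : (∫ x₂ in Set.Ioi (0:ℝ), ∫ x₁ in Set.Ioi (0:ℝ),
        Real.exp (-x₁ - x₂ - θ * x₁ * x₂))
        = ∫ x₂ in Set.Ioi (0:ℝ), (Real.exp (1/θ) / θ)
            * ((x₂ + 1/θ)⁻¹ * Real.exp (-(x₂ + 1/θ))) := by
      apply MeasureTheory.setIntegral_congr_fun measurableSet_Ioi
      intro x₂ hx₂
      simp only []
      rw [aux_inner θ x₂ hθ hx₂]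
      have h2 : (1 + θ * x₂) = θ * (x₂ + 1/θ) := by field_simp; ring
      have h3 : Real.exp (-x₂) = Real.exp (1/θ) * Real.exp (-(x₂ + 1/θ)) := by
        rw [← Real.exp_add]; ring_nf
      rw [h2, h3, mul_inv]
      ring
    rw [step1, MeasureTheory.integral_const_mul, aux_shift (1/θ)]
    ring
  refine ⟨key, fun κ hκ => ?_⟩
  rw [key] at hκ
  have hI : 0 < ∫ w in Set.Ioi (1/θ), w⁻¹ * Real.exp (-w) := aux_pos _ hc
  have hE : (0:ℝ) < Real.exp (1/θ) := Real.exp_pos _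
  rw [Real.exp_neg]
  rw [eq_div_iff hI.ne']
  field_simp at hκ ⊢
  linear_combination hκ
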